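/- Bounds for the lower-level auxiliary function h⁻ (estimates (h-lower) and (h-upper)): Let m ≥ 1, β := (m−1)/m, k > 0 and μ₋ ≥ 0. Then for every v with μ₋ ≤ v ≤ μ₋ + k: (1/(2m)) (μ₋ + k)^{−β} (μ₋ + k − v)² ≤ (1/m) ∫_{v}^{μ₋ + k} (μ₋ + k − σ) σ^{−β} dσ ≤ k ( (μ₋ + k)^{1/m} − v^{1/m} ) ≤ k (μ₋ + k)^{−β} (μ₋ + k − v). -/

import Mathlib

open MeasureTheory Set
open scoped ENNReal NNReal

noncomputable section

abbrev Rd (d : ℕ) := EuclideanSpace ℝ (Fin d)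

/-- The open ball `K_ρ ⊆ ℝ^d` centered at the origin. -/
def Kball (d : ℕ) (ρ : ℝ) : Set (Rd d) := Metric.ball 0 ρ

/-- The unit parabolic cylinder `Q₁ = K₁ × (−1,0]`. -/
def Q1S (d : ℕ) : Set (Rd d × ℝ) := (Kball d 1) ×ˢ Set.Ioc (-1 : ℝ) 0

/-- Spatial partial derivative in direction `i`. -/
def pd (d : ℕ) (f : Rd d → ℝ) (i : Fin d) (x : Rd d) : ℝ :=
  fderiv ℝ f x (EuclideanSpace.single i 1)

/-- Laplacian of a scalar function on `ℝ^d`. -/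
def lap (d : ℕ) (f : Rd d → ℝ) (x : Rd d) : ℝ :=
  ∑ i, pd d (fun y => pd d f i y) i x

/-- Divergence of a vector field on `ℝ^d`. -/
def divg (d : ℕ) (F : Rd d → Rd d) (x : Rd d) : ℝ :=
  ∑ i, pd d (fun y => F y i) i x

/-- Mixed norm `L^p_t L^q_x` on `A × I`. -/
def mixedNorm {d : ℕ} {E : Type*} [NormedAddCommGroup E]
    (p q : ℝ≥0∞) (f : Rd d → ℝ → E) (A : Set (Rd d)) (I : Set ℝ) : ℝ≥0∞ :=
  eLpNorm (fun t => (eLpNorm (fun x => f x t) q (volume.restrict A)).toReal)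
    p (volume.restrict I)

/-- `B` is a `C¹` vector field on `Q₁`. -/
def IsC1VF (d : ℕ) (B : Rd d → ℝ → Rd d) : Prop :=
  ContDiffOn ℝ 1 (fun p : Rd d × ℝ => B p.1 p.2) (Q1S d)

/-- A positive classical solution of `∂ₜ u = Δ(u^m) + ∇·(B u)` on `A × I`. -/
def IsClassicalSolU (d : ℕ) (m : ℝ) (B : Rd d → ℝ → Rd d)
    (u : Rd d → ℝ → ℝ) (A : Set (Rd d)) (I : Set ℝ) : Prop :=
  (∀ x ∈ A, ∀ t ∈ I, 0 < u x t) ∧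
  ContinuousOn (fun p : Rd d × ℝ => u p.1 p.2) (closure (A ×ˢ I)) ∧
  (∀ t ∈ I, ContDiffOn ℝ 2 (fun x => u x t) A) ∧
  (∀ x ∈ A, ∀ t ∈ I, DifferentiableAt ℝ (fun s => u x s) t) ∧
  (∀ x ∈ A, ∀ t ∈ I,
    deriv (fun s => u x s) t
      = lap d (fun y => u y t ^ m) x + divg d (fun y => u y t • B y t) x)

/-- A positive classical solution of `∂ₜ(v^{1/m}) = Δv + ∇·(B v^{1/m})` on `A × I`. -/
def IsClassicalSolV (d : ℕ) (m : ℝ) (B : Rd d → ℝ → Rd d)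
    (v : Rd d → ℝ → ℝ) (A : Set (Rd d)) (I : Set ℝ) : Prop :=
  (∀ x ∈ A, ∀ t ∈ I, 0 < v x t) ∧
  ContinuousOn (fun p : Rd d × ℝ => v p.1 p.2) (closure (A ×ˢ I)) ∧
  (∀ t ∈ I, ContDiffOn ℝ 2 (fun x => v x t) A) ∧
  (∀ x ∈ A, ∀ t ∈ I, DifferentiableAt ℝ (fun s => v x s ^ (1/m)) t) ∧
  (∀ x ∈ A, ∀ t ∈ I,
    deriv (fun s => v x s ^ (1/m)) t
      = lap d (fun y => v y t) x + divg d (fun y => (v y t ^ (1/m)) • B y t) x)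

/-- Supremum of `v` over a space-time set. -/
def supOn (d : ℕ) (v : Rd d → ℝ → ℝ) (S : Set (Rd d × ℝ)) : ℝ :=
  sSup ((fun p : Rd d × ℝ => v p.1 p.2) '' S)

/-- Infimum of `v` over a space-time set. -/
def infOn (d : ℕ) (v : Rd d → ℝ → ℝ) (S : Set (Rd d × ℝ)) : ℝ :=
  sInf ((fun p : Rd d × ℝ => v p.1 p.2) '' S)

/-- Oscillation of `v` over a space-time set. -/
def oscOn (d : ℕ) (v : Rd d → ℝ → ℝ) (S : Set (Rd d × ℝ)) : ℝ :=
  supOn d v S - infOn d v S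

/-- The time interval of the intrinsic cylinder `Q_{k,ρ}(θ)`. -/
def ITime (m k ρ θ : ℝ) : Set ℝ := Set.Ioc (-(θ * k ^ (-((m - 1) / m)) * ρ ^ 2)) 0

/-- The intrinsic cylinder `Q_{k,ρ}(θ) = K_ρ × (−θ k^{−β} ρ², 0]`. -/
def QIntr (d : ℕ) (m k ρ θ : ℝ) : Set (Rd d × ℝ) := Kball d ρ ×ˢ ITime m k ρ θ

/-- The exponent `q = 2 q̂ (1+κ)/(q̂ − 1)` (with value `2(1+κ)` when `q̂ = ∞`). -/
def qdual (qh : ℝ≥0∞) (κ : ℝ) : ℝ :=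
  if qh = ∞ then 2 * (1 + κ) else 2 * qh.toReal * (1 + κ) / (qh.toReal - 1)



theorem aux_hminus
    (m : ℝ) (hm : 1 ≤ m) (k μm : ℝ) (hk : 0 < k) (hμ : 0 ≤ μm)
    (v : ℝ) (hv1 : μm ≤ v) (hv2 : v ≤ μm + k) :
    (1 / (2 * m) * (μm + k) ^ (-((m - 1) / m)) * (μm + k - v) ^ 2
        ≤ (1 / m) * ∫ σ in v..(μm + k), (μm + k - σ) * σ ^ (-((m - 1) / m))) ∧
    ((1 / m) * ∫ σ in v..(μm + k), (μm + k - σ) * σ ^ (-((m - 1) / m)))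
        ≤ k * ((μm + k) ^ (1 / m) - v ^ (1 / m)) ∧
    k * ((μm + k) ^ (1 / m) - v ^ (1 / m))
        ≤ k * (μm + k) ^ (-((m - 1) / m)) * (μm + k - v) := by
  have hm0 : (0:ℝ) < m := lt_of_lt_of_le one_pos hm
  set β : ℝ := -((m - 1) / m) with hβ
  have hβ0 : β ≤ 0 := by
    rw [hβ, neg_nonpos]
    exact div_nonneg (by linarith) hm0.le
  have hβ1 : (-1:ℝ) < β := by
    rw [hβ, neg_lt, neg_neg]
    rw [div_lt_one hm0]; linarith
  have hβE : β + 1 = 1/m := by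
    rw [hβ]; field_simp; ring
  set a : ℝ := μm + k with haeq
  have ha : 0 < a := by positivity
  have hv0 : 0 ≤ v := le_trans hμ hv1
  have hva : v ≤ a := hv2
  -- integrability facts
  have hrpow : IntervalIntegrable (fun σ : ℝ => σ ^ β) volume v a :=
    intervalIntegral.intervalIntegrable_rpow' hβ1
  have hint : IntervalIntegrable (fun σ => (a - σ) * σ ^ β) volume v a :=
    hrpow.continuousOn_mul (Continuous.continuousOn (by continuity))
  have hintOn : MeasureTheory.IntegrableOn (fun σ => (a - σ) * σ ^ β) (Ioc v a) volume :=
    (intervalIntegrable_iff_integrableOn_Ioc_of_le hva).mp hint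
  -- lower bound
  have low : a ^ β * ((a - v) ^ 2 / 2) ≤ ∫ σ in v..a, (a - σ) * σ ^ β := by
    have h1 : (∫ σ in v..a, (a - σ) * a ^ β) ≤ ∫ σ in v..a, (a - σ) * σ ^ β := by
      rw [intervalIntegral.integral_of_le hva, intervalIntegral.integral_of_le hva]
      refine MeasureTheory.setIntegral_mono_on ?_ hintOn measurableSet_Ioc ?_
      · exact ((continuous_const.sub continuous_id).mul continuous_const).integrableOn_Ioc
      · intro σ hσ
        have hσ0 : 0 < σ := lt_of_le_of_lt hv0 hσ.1
        have : a ^ β ≤ σ ^ β := Real.rpow_le_rpow_of_nonpos hσ0 hσ.2 hβ0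
        exact mul_le_mul_of_nonneg_left this (by linarith [hσ.2])
    calc a ^ β * ((a - v) ^ 2 / 2) = ∫ σ in v..a, (a - σ) * a ^ β := by
          rw [intervalIntegral.integral_mul_const, intervalIntegral.integral_sub
            intervalIntegrable_const intervalIntegral.intervalIntegrable_id,
            intervalIntegral.integral_const, integral_id]
          simp only [smul_eq_mul]
          ring
      _ ≤ _ := h1
  -- upper bound via k σ^β
  have hIrpow : (∫ σ in v..a, σ ^ β) = m * (a ^ (1/m) - v ^ (1/m)) := by
    rw [integral_rpow (Or.inl hβ1), hβE, one_div, div_inv_eq_mul, mul_comm]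
  have up : (∫ σ in v..a, (a - σ) * σ ^ β) ≤ k * m * (a ^ (1/m) - v ^ (1/m)) := by
    have h1 : (∫ σ in v..a, (a - σ) * σ ^ β) ≤ ∫ σ in v..a, k * σ ^ β := by
      rw [intervalIntegral.integral_of_le hva, intervalIntegral.integral_of_le hva]
      refine MeasureTheory.setIntegral_mono_on hintOn ?_ measurableSet_Ioc ?_
      · exact (intervalIntegrable_iff_integrableOn_Ioc_of_le hva).mp (hrpow.const_mul k)
      · intro σ hσ
        have hσ0 : 0 < σ := lt_of_le_of_lt hv0 hσ.1
        have h2 : a - σ ≤ k := by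
          have := hσ.1; simp only [haeq]; linarith
        exact mul_le_mul_of_nonneg_right h2 (Real.rpow_nonneg hσ0.le β)
    calc (∫ σ in v..a, (a - σ) * σ ^ β) ≤ ∫ σ in v..a, k * σ ^ β := h1
      _ = k * ∫ σ in v..a, σ ^ β := intervalIntegral.integral_const_mul _ _
      _ = k * m * (a ^ (1/m) - v ^ (1/m)) := by rw [hIrpow]; ring
  -- third inequality
  have third : k * (a ^ (1/m) - v ^ (1/m)) ≤ k * a ^ β * (a - v) := by
    have key : a ^ β * v ≤ v ^ (1/m) := by
      rcases eq_or_lt_of_le hv0 with h0 | h0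
      · rw [← h0]
        simp only [mul_zero]
        exact Real.rpow_nonneg le_rfl _
      · have h2 : a ^ β ≤ v ^ β := Real.rpow_le_rpow_of_nonpos h0 hva hβ0
        calc a ^ β * v ≤ v ^ β * v := mul_le_mul_of_nonneg_right h2 hv0
          _ = v ^ (β + 1) := (Real.rpow_add_one h0.ne' β).symm
          _ = v ^ (1/m) := by rw [hβE]
    have h3 : a ^ (1/m) - v ^ (1/m) ≤ a ^ β * (a - v) := by
      have : a ^ β * a = a ^ (1/m) := by
        rw [← Real.rpow_add_one ha.ne' β, hβE]
      nlinarith [key]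
    calc k * (a ^ (1/m) - v ^ (1/m)) ≤ k * (a ^ β * (a - v)) :=
          mul_le_mul_of_nonneg_left h3 hk.le
      _ = k * a ^ β * (a - v) := by ring
  refine ⟨?_, ?_, third⟩
  · have := mul_le_mul_of_nonneg_left low (by positivity : (0:ℝ) ≤ 1/m)
    calc 1 / (2*m) * a ^ β * (a - v) ^ 2 = 1/m * (a ^ β * ((a-v)^2/2)) := by ring
      _ ≤ _ := this
  · have := mul_le_mul_of_nonneg_left up (by positivity : (0:ℝ) ≤ 1/m)
    calc (1/m) * ∫ σ in v..a, (a - σ) * σ ^ β ≤ 1/m * (k * m * (a ^ (1/m) - v ^ (1/m))) := this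
      _ = k * (a ^ (1/m) - v ^ (1/m)) := by field_simp

/-- bounds for the lower-level auxiliary function `h⁻`. -/
theorem hminus_bounds
    (m : ℝ) (hm : 1 ≤ m) (k μm : ℝ) (hk : 0 < k) (hμ : 0 ≤ μm)
    (v : ℝ) (hv1 : μm ≤ v) (hv2 : v ≤ μm + k) :
    (1 / (2 * m) * (μm + k) ^ (-((m - 1) / m)) * (μm + k - v) ^ 2
        ≤ (1 / m) * ∫ σ in v..(μm + k), (μm + k - σ) * σ ^ (-((m - 1) / m))) ∧
    ((1 / m) * ∫ σ in v..(μm + k), (μm + k - σ) * σ ^ (-((m - 1) / m)))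
        ≤ k * ((μm + k) ^ (1 / m) - v ^ (1 / m)) ∧
    k * ((μm + k) ^ (1 / m) - v ^ (1 / m))
        ≤ k * (μm + k) ^ (-((m - 1) / m)) * (μm + k - v) :=
  aux_hminus m hm k μm hk hμ v hv1 hv2

end
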